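/- If H₀ = 0 is used in place of a positive definite matrix in the block BFGS formula, the result is H⁺ = D(DᵀGD)⁻¹Dᵀ, which satisfies H⁺GH⁺ = H⁺ (i.e., H⁺G is a projection) and is positive semidefinite with rank q. -/

import Mathlib

open Matrix

lemma mulVec_inj_of_rank {d q : ℕ} (D : Matrix (Fin d) (Fin q) ℝ) (hD : D.rank = q) :
    ∀ x : Fin q → ℝ, D *ᵥ x = 0 → x = 0 := by
  intro x hx
  have hker : LinearMap.ker D.mulVecLin = ⊥ := by
    have h := D.mulVecLin.finrank_range_add_finrank_ker
    rw [← Matrix.rank, hD] at h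
    simp only [Module.finrank_pi, Fintype.card_fin] at h
    have : Module.finrank ℝ (LinearMap.ker D.mulVecLin) = 0 := by omega
    exact Submodule.finrank_eq_zero.mp this
  have : x ∈ LinearMap.ker D.mulVecLin := hx
  rw [hker] at this
  simpa using this

lemma S_posdef {d q : ℕ} (G : Matrix (Fin d) (Fin d) ℝ) (hG : G.PosDef)
    (D : Matrix (Fin d) (Fin q) ℝ) (hD : D.rank = q) :
    (Dᵀ * G * D).PosDef := by
  refine posDef_iff_dotProduct_mulVec.mpr ⟨?_, ?_⟩
  · have h : (Dᵀ * G * D)ᴴ = Dᴴ * Gᴴ * Dᴴᵀ := by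
      simp [Matrix.conjTranspose_mul, Matrix.mul_assoc]
    show (Dᵀ * G * D)ᴴ = _
    rw [show (Dᵀ : Matrix (Fin q) (Fin d) ℝ) = Dᴴ from (conjTranspose_eq_transpose_of_trivial D).symm] at *
    rw [conjTranspose_mul, conjTranspose_mul, conjTranspose_conjTranspose, hG.1.eq,
      Matrix.mul_assoc]
  · intro x hx
    have hDx : D *ᵥ x ≠ 0 := fun h => hx (mulVec_inj_of_rank D hD x h)
    have h := (posDef_iff_dotProduct_mulVec.mp hG).2 hDx
    simp only [star_trivial] at h ⊢
    rwa [Matrix.mul_assoc, ← mulVec_mulVec, dotProduct_mulVec, vecMul_transpose, ← mulVec_mulVec]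

/-- With `H₀ = 0` in the block BFGS formula, the result is `H⁺ = D(DᵀGD)⁻¹Dᵀ`, which
satisfies `H⁺GH⁺ = H⁺` (so `H⁺G` is a projection), is positive semidefinite, and has
rank `q`. -/
theorem sdna_metric_special_case {d q : ℕ}
    (G : Matrix (Fin d) (Fin d) ℝ) (hG : G.PosDef)
    (D : Matrix (Fin d) (Fin q) ℝ) (hD : D.rank = q) :
    let Hp := D * (Dᵀ * G * D)⁻¹ * Dᵀ
    Hp * G * Hp = Hp ∧ Hp.PosSemidef ∧ Hp.rank = q := by
  intro Hp
  set S := Dᵀ * G * D with hS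
  have hSpd : S.PosDef := S_posdef G hG D hD
  have hSinv : IsUnit S.det := isUnit_iff_ne_zero.mpr hSpd.det_pos.ne'
  have hSS : S⁻¹ * S = 1 := nonsing_inv_mul S hSinv
  have hproj : Hp * G * Hp = Hp := by
    show D * S⁻¹ * Dᵀ * G * (D * S⁻¹ * Dᵀ) = D * S⁻¹ * Dᵀ
    calc D * S⁻¹ * Dᵀ * G * (D * S⁻¹ * Dᵀ)
        = D * (S⁻¹ * (Dᵀ * G * D)) * (S⁻¹ * Dᵀ) := by
          simp only [Matrix.mul_assoc]
      _ = D * S⁻¹ * Dᵀ := by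
          rw [← hS, hSS, Matrix.mul_one, Matrix.mul_assoc]
  refine ⟨hproj, ?_, ?_⟩
  · have hinv : S⁻¹.PosSemidef := hSpd.inv.posSemidef
    have := hinv.mul_mul_conjTranspose_same D
    rwa [conjTranspose_eq_transpose_of_trivial] at this
  · apply le_antisymm
    · calc Hp.rank ≤ (D * S⁻¹).rank := rank_mul_le_left _ _
        _ ≤ D.rank := rank_mul_le_left _ _
        _ = q := hD
    · have hrec : Hp * (G * D) = D := by
        show D * S⁻¹ * Dᵀ * (G * D) = D
        calc D * S⁻¹ * Dᵀ * (G * D) = D * (S⁻¹ * S) := by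
              rw [hS]; simp only [Matrix.mul_assoc]
          _ = D := by rw [hSS, Matrix.mul_one]
      calc q = D.rank := hD.symm
        _ = (Hp * (G * D)).rank := by rw [hrec]
        _ ≤ Hp.rank := rank_mul_le_left _ _
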